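/- arXiv:2602.19102 — 5 statements merged into one kernel-verified Lean document; each statement's English description precedes it below -/
import Mathlib

section
/- Soundness of the quantifier grounding rule over a sound x-generator: let φ = ∀ ȳ, ψ with free variables x̄, let X_ψ be a superset of the set of valuations (of x̄ and ȳ) making ψ evaluate to something other than true in some total expansion of A, and suppose X_ψ restricted to any fixed x̄-valuation v is finite. Then the conjunction, over all ȳ-instantiations w with (v,w) ∈ X_ψ, of groundings of ψ in (A, (v,w)), is a grounding of ∀ ȳ, ψ in (A, v). -/
/-- soundness of the quantifier grounding rule over a sound
U⊥ x-generator: the conjunction, over the (finite) ȳ-instantiations selected by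
the x-generator, of groundings of ψ is a grounding of ∀ ȳ, ψ. -/
theorem quantifier_grounding_sound
    {Struct Term Vx Vy : Type} (compl : Set Struct)
    (evalT : Term → Struct → Prop)
    (truthψ : Struct → Vx → Vy → Prop)
    (X : Set (Vx × Vy))
    (hX : ∀ v w, (∃ A' ∈ compl, ¬ truthψ A' v w) → (v, w) ∈ X)
    (v : Vx) (W : Finset Vy)
    (hW : ∀ w, (v, w) ∈ X ↔ w ∈ W)
    (g : Vy → Term)
    (hg : ∀ w ∈ W, ∀ A' ∈ compl, (evalT (g w) A' ↔ truthψ A' v w)) :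
    ∀ A' ∈ compl, ((∀ w ∈ W, evalT (g w) A') ↔ (∀ w, truthψ A' v w)) := by
  intro A' hA'
  constructor
  · intro h w
    by_cases hw : w ∈ W
    · exact (hg w hw A' hA').mp (h w hw)
    · by_contra ht
      exact hw ((hW w).mp (hX v w ⟨A', hA', ht⟩))
  · intro h w hw
    exact (hg w hw A' hA').mpr (h w)
end

section
/- The grounding relation of a function application rule 2.3 is correct: given for each argument tᵢ a grounding relation gᵢ : V → Terms (each gᵢ(v) a grounding of tᵢ at v), and an interpretation relation for f mapping every id-tuple ā either to the id f^A(ā) when f is interpreted at ā or to the syntactic term f(ā) otherwise, then the map v ↦ (interpretation-relation lookup at (g₁(v),…,gₙ(v))) yields a grounding of f(t₁,…,tₙ) at v, whenever each gᵢ(v) is an id. -/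
/-- correctness of the grounding relation of a function
application (rule 2.3): looking up the interpretation relation of f at the
id-tuple of argument groundings yields a grounding of f(t₁,…,tₙ). -/
theorem function_application_grounding
    {Struct Term Val D : Type} (compl : Set Struct) (n : ℕ)
    (idT : D → Term)
    (evalC : Term → Struct → D)
    (hid : ∀ (a : D) (A' : Struct), evalC (idT a) A' = a)
    (evalArg : Fin n → Struct → Val → D)   -- meaning of the argument terms tᵢ
    (appT : (Fin n → Term) → Term)
    (fSem : Struct → (Fin n → D) → D)      -- meaning of f in each structure
    (happ : ∀ (ts : Fin n → Term) (A' : Struct),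
      evalC (appT ts) A' = fSem A' (fun i => evalC (ts i) A'))
    (Idef : Set (Fin n → D)) (fA : (Fin n → D) → D)
    (hIdef : ∀ tup ∈ Idef, ∀ A' ∈ compl, fSem A' tup = fA tup)
    (interp : (Fin n → D) → Term)
    (hinterp_pos : ∀ tup ∈ Idef, interp tup = idT (fA tup))
    (hinterp_neg : ∀ tup ∉ Idef, interp tup = appT (fun i => idT (tup i)))
    (v : Val) (g : Fin n → Val → Term)
    (hg : ∀ i, ∀ A' ∈ compl, evalC (g i v) A' = evalArg i A' v)
    (tup : Fin n → D)
    (hids : ∀ i, g i v = idT (tup i)) :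
    ∀ A' ∈ compl, evalC (interp tup) A' = fSem A' (fun i => evalArg i A' v) := by
  intro A' hA'
  have harg : ∀ i, evalArg i A' v = tup i := fun i => by
    rw [← hg i A' hA', hids i, hid]
  have htup : (fun i => evalArg i A' v) = tup := funext harg
  by_cases h : tup ∈ Idef
  · rw [hinterp_pos tup h, hid, htup, hIdef tup h A' hA']
  · rw [hinterp_neg tup h, happ, htup]
    congr 1
    funext i
    rw [hid]
end

section
/- Correctness of the left-outer-join rule for the U⊥ grounding of a predicate application: let p be a predicate with ⊤U interpretation relation P (the finite set of id-tuples where p is interpreted as true), fully interpreted (p^A(ā) = true iff ā ∈ P). For a valuation v with argument groundings ā(v) (all ids), define g(v) = ⊤ if ā(v) ∈ P and g(v) = ⊥ otherwise (the left-outer-join with null→⊥ convention). Then g(v) is a grounding of p(t̄) at v, and the selection {v | g(v) ≠ ⊤} is exactly the U⊥ grounding relation of p(t̄). -/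
/-- correctness of the left-outer-join rule for the U⊥ grounding
of a predicate application with totally interpreted predicate p. -/
theorem predicate_left_outer_join_UF
    {Struct Term Val D : Type} (compl : Set Struct) (n : ℕ)
    (top bot : Term) (htb : top ≠ bot)
    (evalB : Term → Struct → Prop)
    (htop : ∀ A', evalB top A')
    (hbot : ∀ A', ¬ evalB bot A')
    (P : Set (Fin n → D))                      -- ⊤U interpretation relation of p
    (tup : Val → Fin n → D)                      -- argument groundings (all ids)
    (pSem : Struct → (Fin n → D) → Prop)       -- meaning of p in each structure
    (hpSem : ∀ A' ∈ compl, ∀ t, (pSem A' t ↔ t ∈ P))  -- p fully interpreted by P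
    (g : Val → Term)
    (hg_pos : ∀ v, tup v ∈ P → g v = top)
    (hg_neg : ∀ v, tup v ∉ P → g v = bot) :
    (∀ v, ∀ A' ∈ compl, (evalB (g v) A' ↔ pSem A' (tup v))) ∧
    {v | g v ≠ top} = {v | tup v ∉ P} := by
  constructor
  · intro v A' hA'
    rw [hpSem A' hA']
    by_cases h : tup v ∈ P
    · rw [hg_pos v h]; simp [htop A', h]
    · rw [hg_neg v h]; simp [hbot A', h]
  · ext v
    by_cases h : tup v ∈ P
    · simp [hg_pos v h, h]
    · simp [hg_neg v h, h, htb.symm]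
end

section
/- The U⊥ x-generator rule for equivalence is sound: for boolean formulas ψ₀, ψ₁ with groundings g₀, g₁ at each valuation v, if g₀(v) = ⊥ and g₁(v) = ⊥ then the grounding of ψ₀ ⇔ ψ₁ at v is ⊤. Consequently {v | grounding of (ψ₀ ⇔ ψ₁) at v ≠ ⊤} ⊆ {v | g₀(v) ≠ ⊥} ∪ {v | g₁(v) ≠ ⊥}, i.e., the union of the ⊤U x-generators of the two sides is a (possibly non-exact) U⊥ x-generator of the equivalence. -/
/-- the U⊥ x-generator rule for equivalence is sound: the union
of the ⊤U x-generators of both sides is a (possibly non-exact) U⊥ x-generator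
of the equivalence. -/
theorem xgenerator_equivalence_UF
    {Struct Term Val : Type} (compl : Set Struct)
    (top bot : Term)
    (evalB : Term → Struct → Prop)
    (hbot : ∀ A', ¬ evalB bot A')
    (ψ₀ ψ₁ : Struct → Val → Prop)
    (g₀ g₁ : Val → Term)
    (hg₀ : ∀ v, ∀ A' ∈ compl, (evalB (g₀ v) A' ↔ ψ₀ A' v))
    (hg₁ : ∀ v, ∀ A' ∈ compl, (evalB (g₁ v) A' ↔ ψ₁ A' v))
    (geq : Val → Term)
    (hgeq : ∀ v, ∀ A' ∈ compl, (evalB (geq v) A' ↔ (ψ₀ A' v ↔ ψ₁ A' v)))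
    (hsimp : ∀ v, (∀ A' ∈ compl, evalB (geq v) A') → geq v = top) :
    (∀ v, g₀ v = bot → g₁ v = bot → geq v = top) ∧
    {v | geq v ≠ top} ⊆ {v | g₀ v ≠ bot} ∪ {v | g₁ v ≠ bot} := by
  have key : ∀ v, g₀ v = bot → g₁ v = bot → geq v = top := by
    intro v h0 h1
    apply hsimp
    intro A' hA
    rw [hgeq v A' hA]
    constructor
    · intro h; exact absurd ((hg₀ v A' hA).mpr h) (h0 ▸ hbot A')
    · intro h; exact absurd ((hg₁ v A' hA).mpr h) (h1 ▸ hbot A')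
  refine ⟨key, fun v hv => ?_⟩
  by_contra h
  simp only [ne_eq] at h
  simp only [Set.mem_union, Set.mem_setOf_eq, not_or, not_not] at h ⊢
  exact hv (key v h.1 h.2)
end

section
/- Case analysis underlying rule 1.8 (left, with the R-padding): fix a valuation v of the free variables and let W_v = {w | (v,w) in the finite x-generator}, containing all ȳ-valuations where ψ's grounding is not ⊤. If W_v is empty, then ⊤ is a grounding of ∀ ȳ ψ at v; if W_v is nonempty, the ⊓-fold of the groundings of ψ over W_v is a grounding of ∀ ȳ ψ at v. Combining: the ⊓-fold over W_v (with empty fold = ⊤) is always a grounding of ∀ ȳ ψ at v. -/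
/-- case analysis underlying rule 1.8 (left): the ⊓-fold of the
groundings of ψ over W_v (empty fold = ⊤) is always a grounding of ∀ ȳ ψ at v. -/
theorem universal_grounding_fold
    {Struct Term Vy : Type} (compl : Set Struct)
    (top : Term)
    (evalB : Term → Struct → Prop)
    (htop : ∀ A', evalB top A')
    (truthψ : Struct → Vy → Prop)              -- meaning of ψ at (v, w), v fixed
    (g : Vy → Term)
    (hg : ∀ w, ∀ A' ∈ compl, (evalB (g w) A' ↔ truthψ A' w))  -- g(v,w) grounds ψ
    (W : Finset Vy)
    (hW : ∀ w, g w ≠ top → w ∈ W)              -- W contains every w with grounding ≠ ⊤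
    (foldConj : Finset Vy → Term)
    (hfold : ∀ (S : Finset Vy) A', (evalB (foldConj S) A' ↔ ∀ w ∈ S, evalB (g w) A'))
    (hfold_empty : foldConj ∅ = top) :
    (W = ∅ → ∀ A' ∈ compl, (evalB top A' ↔ ∀ w, truthψ A' w)) ∧
    (∀ A' ∈ compl, (evalB (foldConj W) A' ↔ ∀ w, truthψ A' w)) := by
  have main : ∀ A' ∈ compl, (evalB (foldConj W) A' ↔ ∀ w, truthψ A' w) := by
    intro A' hA'
    rw [hfold]
    constructor
    · intro h w
      by_cases hw : w ∈ W
      · exact (hg w A' hA').mp (h w hw)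
      · have : g w = top := by
          by_contra hne; exact hw (hW w hne)
        exact (hg w A' hA').mp (this ▸ htop A')
    · intro h w _
      exact (hg w A' hA').mpr (h w)
  refine ⟨fun hWe => ?_, main⟩
  subst hWe
  rw [← hfold_empty]
  exact main
end
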